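/- Every Gray–Hervella tensor A on the 4-dimensional Hermitian vector space (V, ⟨·,·⟩, J) satisfies the cyclic identity A(X,Y,Z) + A(Y,Z,X) + A(Z,X,Y) − A(JX,JY,Z) − A(JY,JZ,X) − A(JZ,JX,Y) = 0 for all X, Y, Z ∈ V (the defining condition of the Gray–Hervella class G₂ = W₂⊕W₃⊕W₄ holds identically in real dimension 4). -/

import Mathlib

open scoped RealInnerProductSpace

/-- The six-term Gray–Hervella cyclic expression. -/
def ghS {V : Type*} [NormedAddCommGroup V] [InnerProductSpace ℝ V]
    (A : V →ₗ[ℝ] V →ₗ[ℝ] V →ₗ[ℝ] ℝ) (J : V →ₗ[ℝ] V) (X Y Z : V) : ℝ :=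
  A X Y Z + A Y Z X + A Z X Y
    - A (J X) (J Y) Z - A (J Y) (J Z) X - A (J Z) (J X) Y

set_option maxHeartbeats 1000000 in
theorem stmt_17 {V : Type*} [NormedAddCommGroup V] [InnerProductSpace ℝ V]
    (h4 : Module.finrank ℝ V = 4)
    (J : V →ₗ[ℝ] V)
    (hJ2 : J ∘ₗ J = -LinearMap.id)
    (hJinner : ∀ X Y : V, ⟪J X, J Y⟫ = ⟪X, Y⟫)
    (A : V →ₗ[ℝ] V →ₗ[ℝ] V →ₗ[ℝ] ℝ)
    (hA1 : ∀ X Y Z : V, A X Y Z = -A X Z Y)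
    (hA2 : ∀ X Y Z : V, A X Y Z = -A X (J Y) (J Z)) :
    ∀ X Y Z : V,
      A X Y Z + A Y Z X + A Z X Y
        - A (J X) (J Y) Z - A (J Y) (J Z) X - A (J Z) (J X) Y = 0 := by
  haveI : FiniteDimensional ℝ V := FiniteDimensional.of_finrank_eq_succ h4
  haveI : Nontrivial V := Module.nontrivial_of_finrank_pos (R := ℝ) (by rw [h4]; norm_num)
  have hJJ : ∀ X : V, J (J X) = -X := fun X => by
    simpa using LinearMap.congr_fun hJ2 X
  -- basic identities for A
  have h3 : ∀ W Y Z : V, A W (J Y) Z = A W Y (J Z) := by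
    intro W Y Z
    rw [hA2 W Y (J Z), hJJ, map_neg, neg_neg]
  have h5 : ∀ W Y Z : V, A W (J Y) Z = -A W (J Z) Y := by
    intro W Y Z
    linear_combination h3 W Y Z + hA1 W Y (J Z)
  -- symmetries of ghS
  have scyc : ∀ X Y Z : V, ghS A J Y Z X = ghS A J X Y Z := by
    intro X Y Z; simp only [ghS]; ring
  have sswap : ∀ X Y Z : V, ghS A J X Z Y = -ghS A J X Y Z := by
    intro X Y Z; simp only [ghS]
    linear_combination hA1 X Y Z + hA1 Z X Y + hA1 Y Z X
      - h5 (J X) Y Z - h5 (J Z) X Y - h5 (J Y) Z X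
  have sswap12 : ∀ X Y Z : V, ghS A J Y X Z = -ghS A J X Y Z := by
    intro X Y Z
    linarith [scyc Z Y X, scyc X Z Y, sswap X Y Z]
  have sJ : ∀ X Y Z : V, ghS A J (J X) (J Y) Z = -ghS A J X Y Z := by
    intro X Y Z
    simp only [ghS, hJJ, map_neg, LinearMap.neg_apply]
    linear_combination -h3 (J Y) Z X + hA2 Z X Y + hA2 Y Z X - h3 (J Z) X Y
  have salt1 : ∀ X Z : V, ghS A J X X Z = 0 := by
    intro X Z; linarith [sswap12 X X Z]
  have salt2 : ∀ X Y : V, ghS A J X Y Y = 0 := by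
    intro X Y; linarith [sswap X Y Y]
  have salt3 : ∀ X Y : V, ghS A J X Y X = 0 := by
    intro X Y; linarith [scyc X Y X, salt2 Y X]
  have sneg2 : ∀ X Y Z : V, ghS A J X (-Y) Z = -ghS A J X Y Z := by
    intro X Y Z
    simp only [ghS, map_neg, LinearMap.neg_apply]; ring
  -- the key vanishing on pairs (x, Jx)
  have k1 : ∀ x z : V, ghS A J x (J x) z = 0 := by
    intro x z
    have h := sJ x (J x) z
    rw [hJJ, sneg2] at h
    have h2 := sswap12 x (J x) z
    linarith
  have perm : ∀ u v w : V, ghS A J u v w = 0 →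
      ghS A J u w v = 0 ∧ ghS A J v w u = 0 ∧ ghS A J w u v = 0 ∧
      ghS A J v u w = 0 ∧ ghS A J w v u = 0 := by
    intro u v w h
    have e2 := sswap u v w
    have e3 := scyc u v w
    have e4 := scyc w u v
    have e5 := sswap12 u v w
    have e6 := sswap w u v
    refine ⟨by linarith, by linarith, by linarith, by linarith, by linarith⟩
  -- skew-adjointness of J and basic inner product facts
  have hskew : ∀ x y : V, ⟪J x, y⟫ = -⟪x, J y⟫ := by
    intro x y
    have h := hJinner x (J y)
    rw [hJJ] at h
    simp only [inner_neg_right] at h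
    linarith
  have hxJx : ∀ x : V, ⟪x, J x⟫ = 0 := by
    intro x
    have hc := real_inner_comm x (J x)
    linarith [hskew x x, hc]
  have hJnorm : ∀ x : V, ‖J x‖ = ‖x‖ := by
    intro x
    have h := hJinner x x
    rw [real_inner_self_eq_norm_mul_norm, real_inner_self_eq_norm_mul_norm] at h
    rcases mul_self_eq_mul_self_iff.mp h with h' | h'
    · exact h'
    · have := norm_nonneg (J x); have := norm_nonneg x
      nlinarith
  -- construct the adapted orthonormal basis
  obtain ⟨w1, hw1⟩ := exists_ne (0 : V)
  set e1 : V := (‖w1‖⁻¹ : ℝ) • w1 with he1def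
  have he1 : ‖e1‖ = 1 := norm_smul_inv_norm hw1
  have he1ne : e1 ≠ 0 := by
    intro h; rw [h, norm_zero] at he1; norm_num at he1
  have hJe1ne : J e1 ≠ 0 := by
    intro h
    have := hJJ e1
    rw [h, map_zero] at this
    exact he1ne (by simpa using this.symm)
  set K : Submodule ℝ V := (ℝ ∙ e1) ⊔ (ℝ ∙ (J e1)) with hKdef
  have hKle : Module.finrank ℝ K ≤ 2 := by
    have h1 := finrank_span_singleton (K := ℝ) he1ne
    have h2 := finrank_span_singleton (K := ℝ) hJe1ne
    have h3 := Submodule.finrank_sup_add_finrank_inf_eq (ℝ ∙ e1) (ℝ ∙ (J e1))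
    rw [← hKdef] at h3
    omega
  have horth := Submodule.finrank_add_finrank_orthogonal K
  have hKbot : Kᗮ ≠ ⊥ := by
    intro h
    rw [h, finrank_bot, h4] at horth
    omega
  obtain ⟨w3, hw3K, hw3⟩ := Submodule.exists_mem_ne_zero_of_ne_bot hKbot
  set e3 : V := (‖w3‖⁻¹ : ℝ) • w3 with he3def
  have he3 : ‖e3‖ = 1 := norm_smul_inv_norm hw3
  have he3K : e3 ∈ Kᗮ := Submodule.smul_mem _ _ hw3K
  have he1K : e1 ∈ K := Submodule.mem_sup_left (Submodule.mem_span_singleton_self e1)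
  have hJe1K : J e1 ∈ K := Submodule.mem_sup_right (Submodule.mem_span_singleton_self (J e1))
  have h13 : ⟪e1, e3⟫ = 0 := he3K e1 he1K
  have h23 : ⟪J e1, e3⟫ = 0 := he3K (J e1) hJe1K
  have h12 : ⟪e1, J e1⟫ = 0 := hxJx e1
  have h34 : ⟪e3, J e3⟫ = 0 := hxJx e3
  have h14 : ⟪e1, J e3⟫ = 0 := by
    linarith [hskew e1 e3, h23]
  have h24 : ⟪J e1, J e3⟫ = 0 := by rw [hJinner]; exact h13
  have h21 : ⟪J e1, e1⟫ = 0 := by rw [real_inner_comm]; exact h12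
  have h31 : ⟪e3, e1⟫ = 0 := by rw [real_inner_comm]; exact h13
  have h41 : ⟪J e3, e1⟫ = 0 := by rw [real_inner_comm]; exact h14
  have h32 : ⟪e3, J e1⟫ = 0 := by rw [real_inner_comm]; exact h23
  have h42 : ⟪J e3, J e1⟫ = 0 := by rw [real_inner_comm]; exact h24
  have h43 : ⟪J e3, e3⟫ = 0 := by rw [real_inner_comm]; exact h34
  have hJe1norm : ‖J e1‖ = 1 := by rw [hJnorm]; exact he1
  have hJe3norm : ‖J e3‖ = 1 := by rw [hJnorm]; exact he3
  clear_value e3 e1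
  -- the orthonormal family
  have honv : Orthonormal ℝ (![e1, J e1, e3, J e3] : Fin 4 → V) := by
    constructor
    · intro i
      fin_cases i
      · exact he1
      · exact hJe1norm
      · exact he3
      · exact hJe3norm
    · intro i j hij
      fin_cases i <;> fin_cases j <;> (try exact absurd rfl hij) <;>
        simp only [Fin.reduceFinMk, Matrix.cons_val_zero, Matrix.cons_val_one,
          Matrix.cons_val_two, Matrix.cons_val_three, Matrix.tail_cons, Matrix.head_cons]
      exacts [h12, h13, h14, h21, h23, h24, h31, h32, h34, h41, h42, h43]
  have card_eq : Fintype.card (Fin 4) = Module.finrank ℝ V := by simp [h4]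
  set b : Module.Basis (Fin 4) ℝ V :=
    basisOfLinearIndependentOfCardEqFinrank honv.linearIndependent card_eq with hbdef
  have hb : ∀ i, b i = (![e1, J e1, e3, J e3] : Fin 4 → V) i := by
    intro i
    rw [hbdef, coe_basisOfLinearIndependentOfCardEqFinrank]
  clear_value b
  -- the bundled trilinear map equal to ghS
  have Tapp : ∀ X Y Z : V,
      (A + ((LinearMap.lflip (R₀ := ℝ)).toLinearMap ∘ₗ A).flip + (LinearMap.lflip (R₀ := ℝ)).toLinearMap ∘ₗ A.flip
        + (-1 : ℝ) • ((A ∘ₗ J).compl₂ J)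
        + (-1 : ℝ) • ((LinearMap.lflip (R₀ := ℝ)).toLinearMap ∘ₗ ((A ∘ₗ J).compl₂ J)).flip
        + (-1 : ℝ) • (LinearMap.lflip (R₀ := ℝ)).toLinearMap ∘ₗ ((A ∘ₗ J).compl₂ J).flip) X Y Z = ghS A J X Y Z := by
    intro X Y Z; simp only [ghS, LinearMap.add_apply, LinearMap.smul_apply, LinearMap.comp_apply, LinearMap.flip_apply, LinearEquiv.coe_coe, LinearMap.lflip_apply, LinearMap.compl₂_apply, smul_eq_mul]; ring
  have hTzero :
      (A + ((LinearMap.lflip (R₀ := ℝ)).toLinearMap ∘ₗ A).flip + (LinearMap.lflip (R₀ := ℝ)).toLinearMap ∘ₗ A.flip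
        + (-1 : ℝ) • ((A ∘ₗ J).compl₂ J)
        + (-1 : ℝ) • ((LinearMap.lflip (R₀ := ℝ)).toLinearMap ∘ₗ ((A ∘ₗ J).compl₂ J)).flip
        + (-1 : ℝ) • (LinearMap.lflip (R₀ := ℝ)).toLinearMap ∘ₗ ((A ∘ₗ J).compl₂ J).flip) = 0 := by
    refine b.ext fun i => b.ext fun j => b.ext fun k => ?_
    simp only [LinearMap.zero_apply]
    rw [Tapp, hb, hb, hb]
    fin_cases i <;> fin_cases j <;> fin_cases k <;>
      simp only [Fin.reduceFinMk, Matrix.cons_val_zero, Matrix.cons_val_one,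
        Matrix.cons_val_two, Matrix.cons_val_three, Matrix.tail_cons, Matrix.head_cons]
    exacts [salt1 e1 e1,
      salt1 e1 (J e1),
      salt1 e1 e3,
      salt1 e1 (J e3),
      salt3 e1 (J e1),
      salt2 e1 (J e1),
      k1 e1 e3,
      k1 e1 (J e3),
      salt3 e1 e3,
      (perm e1 (J e1) e3 (k1 e1 e3)).1,
      salt2 e1 e3,
      (perm e3 (J e3) e1 (k1 e3 e1)).2.2.1,
      salt3 e1 (J e3),
      (perm e1 (J e1) (J e3) (k1 e1 (J e3))).1,
      (perm e3 (J e3) e1 (k1 e3 e1)).2.2.2.2,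
      salt2 e1 (J e3),
      salt2 (J e1) e1,
      salt3 (J e1) e1,
      (perm e1 (J e1) e3 (k1 e1 e3)).2.2.2.1,
      (perm e1 (J e1) (J e3) (k1 e1 (J e3))).2.2.2.1,
      salt1 (J e1) e1,
      salt1 (J e1) (J e1),
      salt1 (J e1) e3,
      salt1 (J e1) (J e3),
      (perm e1 (J e1) e3 (k1 e1 e3)).2.1,
      salt3 (J e1) e3,
      salt2 (J e1) e3,
      (perm e3 (J e3) (J e1) (k1 e3 (J e1))).2.2.1,
      (perm e1 (J e1) (J e3) (k1 e1 (J e3))).2.1,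
      salt3 (J e1) (J e3),
      (perm e3 (J e3) (J e1) (k1 e3 (J e1))).2.2.2.2,
      salt2 (J e1) (J e3),
      salt2 e3 e1,
      (perm e1 (J e1) e3 (k1 e1 e3)).2.2.1,
      salt3 e3 e1,
      (perm e3 (J e3) e1 (k1 e3 e1)).1,
      (perm e1 (J e1) e3 (k1 e1 e3)).2.2.2.2,
      salt2 e3 (J e1),
      salt3 e3 (J e1),
      (perm e3 (J e3) (J e1) (k1 e3 (J e1))).1,
      salt1 e3 e1,
      salt1 e3 (J e1),
      salt1 e3 e3,
      salt1 e3 (J e3),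
      k1 e3 e1,
      k1 e3 (J e1),
      salt3 e3 (J e3),
      salt2 e3 (J e3),
      salt2 (J e3) e1,
      (perm e1 (J e1) (J e3) (k1 e1 (J e3))).2.2.1,
      (perm e3 (J e3) e1 (k1 e3 e1)).2.1,
      salt3 (J e3) e1,
      (perm e1 (J e1) (J e3) (k1 e1 (J e3))).2.2.2.2,
      salt2 (J e3) (J e1),
      (perm e3 (J e3) (J e1) (k1 e3 (J e1))).2.1,
      salt3 (J e3) (J e1),
      (perm e3 (J e3) e1 (k1 e3 e1)).2.2.2.1,
      (perm e3 (J e3) (J e1) (k1 e3 (J e1))).2.2.2.1,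
      salt2 (J e3) e3,
      salt3 (J e3) e3,
      salt1 (J e3) e1,
      salt1 (J e3) (J e1),
      salt1 (J e3) e3,
      salt1 (J e3) (J e3)]
  intro X Y Z
  have h := LinearMap.congr_fun
    (LinearMap.congr_fun (LinearMap.congr_fun hTzero X) Y) Z
  rw [Tapp] at h
  simpa [ghS] using h
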